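/- Let U be a subset of the Farey sequence F_m, and for P/Q ∈ U let P'/Q' be its successor in F_m. Then the Lebesgue measure of the union over P/Q ∈ U of the intervals [P/Q, P'/Q'] is at most C·√(#U)/m for a universal constant C. -/

import Mathlib

open MeasureTheory

/-- The Farey set `F_m`: rationals in `[0,1]` with denominator (in lowest terms) at most `m`. -/
def Farey (m : ℕ) : Set ℚ := {x | 0 ≤ x ∧ x ≤ 1 ∧ x.den ≤ m}

lemma between_den {p q a b : ℤ} (hq : 0 < q) (hb : 0 < b) (hab : q*a - p*b = 1)
    {w : ℚ} (h1 : (p:ℚ)/q < w) (h2 : w < (a:ℚ)/b) : q + b ≤ (w.den : ℤ) := by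
  have hd : (0:ℤ) < (w.den : ℤ) := by exact_mod_cast w.pos
  have hw : ((w.num : ℚ))/(w.den : ℚ) = w := Rat.num_div_den w
  have hq' : (0:ℚ) < (q:ℚ) := by exact_mod_cast hq
  have hb' : (0:ℚ) < (b:ℚ) := by exact_mod_cast hb
  rw [← hw] at h1 h2
  rw [div_lt_div_iff₀ hq' (by exact_mod_cast hd)] at h1
  rw [div_lt_div_iff₀ (by exact_mod_cast hd) hb'] at h2
  have h1' : p * (w.den:ℤ) < w.num * q := by exact_mod_cast h1
  have h2' : w.num * b < a * (w.den:ℤ) := by exact_mod_cast h2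
  nlinarith [h1', h2', hab, hb, hq]

lemma farey_gap (m : ℕ) (hm : 0 < m) {x y : ℚ}
    (hx : x ∈ Farey m) (hy : y ∈ Farey m) (hxy : x < y)
    (hno : ∀ r ∈ Farey m, ¬(x < r ∧ r < y)) :
    y - x ≤ 2 / ((m : ℚ) * (min x.den y.den : ℕ)) := by
  obtain ⟨hx0, hx1, hxd⟩ := hx
  obtain ⟨hy0, hy1, hyd⟩ := hy
  set p : ℤ := x.num with hp
  set q : ℤ := (x.den : ℤ) with hqdef
  have hq : 0 < q := by rw [hqdef]; exact_mod_cast x.pos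
  have hqm : q ≤ (m:ℤ) := by rw [hqdef]; exact_mod_cast hxd
  have hxeq : (p:ℚ)/q = x := Rat.num_div_den x
  have hcop : Int.gcd p q = 1 := x.reduced
  have hbez : (1:ℤ) = p * Int.gcdA p q + q * Int.gcdB p q := by
    have := Int.gcd_eq_gcd_ab p q
    rw [hcop] at this; exact_mod_cast this
  set L : ℤ := (m:ℤ) - q + 1 with hL
  set k : ℤ := (-(Int.gcdA p q) - L) / q with hk
  set b : ℤ := -(Int.gcdA p q) - q * k with hbdef
  set a : ℤ := Int.gcdB p q - p * k with hadef
  have hab : q * a - p * b = 1 := by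
    simp only [hadef, hbdef]; linear_combination -hbez
  have hbL : L ≤ b ∧ b < L + q := by
    have h1 : b - L = (-(Int.gcdA p q) - L) % q := by
      rw [Int.emod_def]; simp only [hbdef, hk]; ring
    constructor
    · have := Int.emod_nonneg (-(Int.gcdA p q) - L) (ne_of_gt hq)
      omega
    · have := Int.emod_lt_of_pos (-(Int.gcdA p q) - L) hq
      omega
  have hb1 : 0 < b := by omega
  have hbm : b ≤ (m:ℤ) := by omega
  have hqb : (m:ℤ) + 1 ≤ q + b := by omega
  have hq' : (0:ℚ) < (q:ℚ) := by exact_mod_cast hq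
  have hb' : (0:ℚ) < (b:ℚ) := by exact_mod_cast hb1
  set z : ℚ := (a:ℚ)/(b:ℚ) with hz
  have hxz : x < z := by
    rw [← hxeq, hz, div_lt_div_iff₀ hq' hb']
    have h2 : p * b < a * q := by nlinarith [hab]
    exact_mod_cast h2
  have hzb : (z.den : ℤ) ≤ b := by
    have hdvd : ((Rat.divInt a b).den : ℤ) ∣ b := Rat.den_dvd a b
    have he : (Rat.divInt a b) = z := by rw [hz, Rat.divInt_eq_div]
    rw [he] at hdvd
    exact Int.le_of_dvd hb1 hdvd
  have hzden : (z.den : ℤ) ≤ (m:ℤ) := le_trans hzb hbm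
  rcases lt_trichotomy y z with hlt | heq | hgt
  · exfalso
    have := between_den hq hb1 hab (by rw [hxeq]; exact hxy) hlt
    have hyd' : (y.den : ℤ) ≤ (m:ℤ) := by exact_mod_cast hyd
    omega
  · have habQ : (q:ℚ) * a - p * b = 1 := by exact_mod_cast hab
    have hgap : y - x = 1 / ((q:ℚ) * b) := by
      rw [heq, hz, ← hxeq]
      field_simp
      linear_combination habQ
    have hydz : (y.den:ℤ) ≤ b := by rw [heq]; exact hzb
    have hminq : (min x.den y.den : ℤ) ≤ q := by
      rw [hqdef]; exact_mod_cast Nat.cast_le.mpr (min_le_left _ _)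
    have hminb : (min x.den y.den : ℤ) ≤ b := by
      refine le_trans ?_ hydz; exact_mod_cast Nat.cast_le.mpr (min_le_right _ _)
    have hminpos : (0:ℤ) < (min x.den y.den : ℤ) := by
      exact_mod_cast Nat.cast_pos.mpr (lt_min x.pos y.pos)
    have key : (m:ℤ) * (min x.den y.den : ℤ) ≤ 2 * (q * b) := by
      nlinarith [mul_le_mul_of_nonneg_left hminb (le_of_lt hq),
        mul_le_mul_of_nonneg_left hminq (le_of_lt hb1),
        mul_le_mul_of_nonneg_right hqb (le_of_lt hminpos), hminpos]
    have pos2 : (0:ℚ) < (m:ℚ) * ((min x.den y.den : ℕ):ℚ) := by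
      have : (0:ℚ) < ((min x.den y.den : ℕ):ℚ) := by exact_mod_cast lt_min x.pos y.pos
      positivity
    rw [hgap, div_le_div_iff₀ (by positivity) pos2]
    have keyQ : (m:ℚ) * ((min x.den y.den : ℕ):ℚ) ≤ 2 * ((q:ℚ) * b) := by
      exact_mod_cast key
    linarith [keyQ]
  · exfalso
    have hz1 : z ≤ 1 := le_of_lt (lt_of_lt_of_le hgt hy1)
    have hz0 : 0 ≤ z := le_of_lt (lt_of_le_of_lt hx0 hxz)
    have hzF : z ∈ Farey m := ⟨hz0, hz1, by exact_mod_cast hzden⟩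
    exact hno z hzF ⟨hxz, hgt⟩

lemma card_le_of_den (V : Finset ℚ) (f : ℚ → ℚ) (j : ℕ)
    (hinj : Set.InjOn f V) (h : ∀ x ∈ V, 0 ≤ f x ∧ f x ≤ 1 ∧ (f x).den = j) :
    V.card ≤ j + 1 := by
  classical
  have := Finset.card_le_card_of_injOn (s := V) (t := Finset.range (j+1))
    (fun x => (f x).num.toNat) ?_ ?_
  · simpa [Finset.card_range] using this
  · intro x hx
    obtain ⟨h0, h1, hd⟩ := h x hx
    have hn0 : 0 ≤ (f x).num := Rat.num_nonneg.mpr h0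
    have hnd : (f x).num ≤ ((f x).den : ℤ) := by
      rw [← Rat.num_div_den (f x), div_le_one (by exact_mod_cast (f x).pos)] at h1
      exact_mod_cast h1
    rw [Finset.mem_coe, Finset.mem_range]
    rw [hd] at hnd
    show (f x).num.toNat < j + 1
    omega
  · intro x hx y hy hxy
    obtain ⟨hx0, _, hxd⟩ := h x hx
    obtain ⟨hy0, _, hyd⟩ := h y hy
    have hnx : 0 ≤ (f x).num := Rat.num_nonneg.mpr hx0
    have hny : 0 ≤ (f y).num := Rat.num_nonneg.mpr hy0
    simp only at hxy
    apply hinj hx hy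
    apply Rat.ext ?_ (hxd.trans hyd.symm)
    omega

theorem farey_union_measure_bound :
    ∃ C : ℝ, 0 < C ∧ ∀ (m : ℕ), 0 < m → ∀ (U : Finset ℚ), ↑U ⊆ Farey m →
      ∀ succ : ℚ → ℚ, (∀ x ∈ U, succ x ∈ Farey m ∧ x < succ x ∧
        ∀ r ∈ Farey m, ¬(x < r ∧ r < succ x)) →
      (volume (⋃ x ∈ U, Set.Icc (x : ℝ) ((succ x : ℚ) : ℝ))).toReal
        ≤ C * Real.sqrt U.card / m := by
  classical
  refine ⟨18, by norm_num, ?_⟩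
  intro m hm U hU succ hsucc
  have hm' : (0:ℝ) < m := by exact_mod_cast hm
  by_cases hn0 : U.card = 0
  · rw [Finset.card_eq_zero] at hn0
    subst hn0
    simp [Real.sqrt_zero]
  have hn1 : 1 ≤ U.card := Nat.one_le_iff_ne_zero.mpr hn0
  set n := U.card with hn
  set g : ℚ → ℕ := fun x => min x.den (succ x).den with hg
  have hg1 : ∀ x ∈ U, 1 ≤ g x := fun x _ => le_min x.pos (succ x).pos
  have hgap : ∀ x ∈ U, ((succ x : ℚ):ℝ) - (x:ℝ) ≤ 2 / (m * g x) := by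
    intro x hx
    obtain ⟨hsF, hlt, hno⟩ := hsucc x hx
    have h := farey_gap m hm (hU hx) hsF hlt hno
    have h2 : ((succ x - x : ℚ):ℝ) ≤ ((2 / ((m:ℚ) * (min x.den (succ x).den : ℕ)) : ℚ):ℝ) :=
      Rat.cast_le.mpr h
    push_cast at h2
    simpa [hg] using h2
  have hnonneg : ∀ x ∈ U, (0:ℝ) ≤ ((succ x:ℚ):ℝ) - (x:ℝ) := by
    intro x hx
    have h := (hsucc x hx).2.1
    have : (x:ℝ) ≤ ((succ x:ℚ):ℝ) := by exact_mod_cast h.le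
    linarith
  have h1 : (volume (⋃ x ∈ U, Set.Icc (x:ℝ) ((succ x:ℚ):ℝ))).toReal
      ≤ ∑ x ∈ U, (((succ x:ℚ):ℝ) - (x:ℝ)) := by
    have hv : volume (⋃ x ∈ U, Set.Icc (x:ℝ) ((succ x:ℚ):ℝ))
        ≤ ∑ x ∈ U, ENNReal.ofReal (((succ x:ℚ):ℝ) - (x:ℝ)) := by
      refine le_trans (measure_biUnion_finset_le U _) ?_
      refine Finset.sum_le_sum fun x hx => ?_
      rw [Real.volume_Icc]
    have hfin : (∑ x ∈ U, ENNReal.ofReal (((succ x:ℚ):ℝ) - (x:ℝ))) ≠ ⊤ :=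
      (ENNReal.sum_lt_top.mpr fun x _ => ENNReal.ofReal_lt_top).ne
    calc (volume (⋃ x ∈ U, Set.Icc (x:ℝ) ((succ x:ℚ):ℝ))).toReal
        ≤ (∑ x ∈ U, ENNReal.ofReal (((succ x:ℚ):ℝ) - (x:ℝ))).toReal :=
          ENNReal.toReal_mono hfin hv
      _ = ∑ x ∈ U, (ENNReal.ofReal (((succ x:ℚ):ℝ) - (x:ℝ))).toReal :=
          ENNReal.toReal_sum fun x _ => ENNReal.ofReal_ne_top
      _ = ∑ x ∈ U, (((succ x:ℚ):ℝ) - (x:ℝ)) :=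
          Finset.sum_congr rfl fun x hx => ENNReal.toReal_ofReal (hnonneg x hx)
  have hsinj : Set.InjOn succ U := by
    intro x hx y hy hxy
    by_contra hne
    rcases lt_or_gt_of_ne hne with h | h
    · exact (hsucc x hx).2.2 y (hU hy) ⟨h, by rw [hxy]; exact (hsucc y hy).2.1⟩
    · exact (hsucc y hy).2.2 x (hU hx) ⟨h, by rw [← hxy]; exact (hsucc x hx).2.1⟩
  have hfib : ∀ j : ℕ, (U.filter (fun x => g x = j)).card ≤ 2*j + 2 := by
    intro j
    have hsub : U.filter (fun x => g x = j) ⊆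
        U.filter (fun x => x.den = j) ∪ U.filter (fun x => (succ x).den = j) := by
      intro x hx
      simp only [Finset.mem_filter, Finset.mem_union] at hx ⊢
      rcases min_choice x.den (succ x).den with he | he
      · exact Or.inl ⟨hx.1, by rw [← hx.2, hg]; exact he.symm⟩
      · exact Or.inr ⟨hx.1, by rw [← hx.2, hg]; exact he.symm⟩
    have c1 : (U.filter (fun x => x.den = j)).card ≤ j + 1 := by
      apply card_le_of_den _ id j (Function.injective_id.injOn)
      intro x hx
      rw [Finset.mem_filter] at hx
      obtain ⟨h0, h1, _⟩ := hU hx.1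
      exact ⟨h0, h1, hx.2⟩
    have c2 : (U.filter (fun x => (succ x).den = j)).card ≤ j + 1 := by
      apply card_le_of_den _ succ j
      · exact hsinj.mono (by intro x hx; exact Finset.mem_coe.mpr (Finset.mem_of_mem_filter x (by exact_mod_cast hx)))
      · intro x hx
        rw [Finset.mem_filter] at hx
        obtain ⟨h0, h1, _⟩ := (hsucc x hx.1).1
        exact ⟨h0, h1, hx.2⟩
    calc (U.filter (fun x => g x = j)).card
        ≤ (U.filter (fun x => x.den = j) ∪ U.filter (fun x => (succ x).den = j)).card :=
          Finset.card_le_card hsub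
      _ ≤ (U.filter (fun x => x.den = j)).card + (U.filter (fun x => (succ x).den = j)).card :=
          Finset.card_union_le _ _
      _ ≤ 2*j + 2 := by omega
  set K := Nat.sqrt n + 1 with hK
  have hKn1 : 1 ≤ K := by omega
  set f : ℚ → ℝ := fun x => 2 / (m * g x) with hf
  have hsum : ∑ x ∈ U, f x = ∑ x ∈ U.filter (fun x => g x ≤ K), f x
      + ∑ x ∈ U.filter (fun x => ¬ g x ≤ K), f x :=
    (Finset.sum_filter_add_sum_filter_not U _ _).symm
  have hA : ∑ x ∈ U.filter (fun x => g x ≤ K), f x ≤ K * (8 / m) := by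
    rw [← Finset.sum_fiberwise_of_maps_to (g := g) (t := Finset.Icc 1 K)
      (fun x hx => by rw [Finset.mem_filter] at hx; rw [Finset.mem_Icc]; exact ⟨hg1 x hx.1, hx.2⟩) f]
    calc ∑ j ∈ Finset.Icc 1 K, ∑ x ∈ (U.filter (fun x => g x ≤ K)).filter (fun x => g x = j), f x
        ≤ ∑ _j ∈ Finset.Icc 1 K, (8 / (m:ℝ)) := by
          refine Finset.sum_le_sum fun j hj => ?_
          rw [Finset.mem_Icc] at hj
          have hj1 : 1 ≤ j := hj.1
          have hcard : ((U.filter (fun x => g x ≤ K)).filter (fun x => g x = j)).card ≤ 2*j+2 := by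
            refine le_trans (Finset.card_le_card ?_) (hfib j)
            intro x hx
            simp only [Finset.mem_filter] at hx ⊢
            exact ⟨hx.1.1, hx.2⟩
          have hconst : ∀ x ∈ (U.filter (fun x => g x ≤ K)).filter (fun x => g x = j),
              f x = 2/((m:ℝ)*j) := by
            intro x hx
            simp only [Finset.mem_filter] at hx
            rw [hf]
            simp only [hx.2]
          rw [Finset.sum_congr rfl hconst, Finset.sum_const, nsmul_eq_mul]
          have hj1' : (1:ℝ) ≤ (j:ℝ) := by exact_mod_cast hj1
          have hcard' : (((U.filter (fun x => g x ≤ K)).filter (fun x => g x = j)).card : ℝ)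
              ≤ 2*(j:ℝ)+2 := by exact_mod_cast hcard
          have hpos : (0:ℝ) ≤ 2/((m:ℝ)*j) := by positivity
          calc (((U.filter (fun x => g x ≤ K)).filter (fun x => g x = j)).card : ℝ) * (2/((m:ℝ)*j))
              ≤ (2*(j:ℝ)+2) * (2/((m:ℝ)*j)) := by
                exact mul_le_mul_of_nonneg_right hcard' hpos
            _ ≤ 8 / (m:ℝ) := by
                have hjpos : (0:ℝ) < (j:ℝ) := by linarith
                have he : (2*(j:ℝ)+2) * (2/((m:ℝ)*j)) = (4*(j:ℝ)+4)/((m:ℝ)*j) := by ring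
                rw [he, div_le_div_iff₀ (by positivity) hm']
                nlinarith
      _ = (K:ℝ) * (8/(m:ℝ)) := by
          rw [Finset.sum_const, Nat.card_Icc, nsmul_eq_mul]
          norm_num
  have hB : ∑ x ∈ U.filter (fun x => ¬ g x ≤ K), f x ≤ (n:ℝ) * (2 / (m * K)) := by
    have hterm : ∀ x ∈ U.filter (fun x => ¬ g x ≤ K), f x ≤ 2 / ((m:ℝ) * K) := by
      intro x hx
      rw [Finset.mem_filter] at hx
      have hgx : (K:ℝ) ≤ (g x : ℝ) := by exact_mod_cast (le_of_not_ge hx.2).trans (le_refl _)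
      rw [hf]
      have hKpos : (0:ℝ) < (K:ℝ) := by exact_mod_cast hKn1
      show (2:ℝ)/((m:ℝ)*(g x : ℝ)) ≤ 2/((m:ℝ)*(K:ℝ))
      gcongr
    calc ∑ x ∈ U.filter (fun x => ¬ g x ≤ K), f x
        ≤ ∑ _x ∈ U.filter (fun x => ¬ g x ≤ K), (2 / ((m:ℝ) * K)) :=
          Finset.sum_le_sum hterm
      _ = ((U.filter (fun x => ¬ g x ≤ K)).card : ℝ) * (2 / ((m:ℝ) * K)) := by
          rw [Finset.sum_const, nsmul_eq_mul]
      _ ≤ (n:ℝ) * (2 / ((m:ℝ) * K)) := by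
          have : ((U.filter (fun x => ¬ g x ≤ K)).card : ℝ) ≤ (n:ℝ) := by
            exact_mod_cast Finset.card_filter_le U _
          have hpos : (0:ℝ) ≤ 2 / ((m:ℝ) * K) := by positivity
          exact mul_le_mul_of_nonneg_right this hpos
  set s := Real.sqrt n with hs
  have hsn : (0:ℝ) ≤ (n:ℝ) := Nat.cast_nonneg n
  have hs1 : 1 ≤ s := by
    rw [hs, show (1:ℝ) = Real.sqrt 1 by rw [Real.sqrt_one]]
    exact Real.sqrt_le_sqrt (by exact_mod_cast hn1)
  have hKle : (K:ℝ) ≤ s + 1 := by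
    have := Real.nat_sqrt_le_real_sqrt (a := n)
    rw [hK]; push_cast; rw [← hs] at *; linarith
  have hKge : s ≤ (K:ℝ) := by
    have := Real.real_sqrt_le_nat_sqrt_succ (a := n)
    rw [hK]; push_cast; rw [← hs] at *; linarith
  have hns : (n:ℝ) = s * s := (Real.mul_self_sqrt hsn).symm
  have hKpos : (0:ℝ) < (K:ℝ) := by exact_mod_cast hKn1
  have htot : ∑ x ∈ U, f x ≤ 18 * s / m := by
    rw [hsum]
    have h2 : (n:ℝ) * (2/((m:ℝ)*K)) ≤ 2 * s / m := by
      rw [hns]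
      have he : s * s * (2/((m:ℝ)*K)) = (2*s*s)/((m:ℝ)*K) := by ring
      rw [he, div_le_div_iff₀ (mul_pos hm' hKpos) hm']
      nlinarith [mul_le_mul_of_nonneg_left hKge (mul_nonneg (mul_nonneg (by norm_num) (by linarith)) hm'.le : (0:ℝ) ≤ 2*s*(m:ℝ))]
    have h3 : (K:ℝ) * (8/(m:ℝ)) ≤ (s+1) * (8/(m:ℝ)) := by
      have hpos : (0:ℝ) ≤ 8/(m:ℝ) := by positivity
      exact mul_le_mul_of_nonneg_right hKle hpos
    have h4 : (s+1) * (8/(m:ℝ)) + 2*s/m ≤ 18*s/m := by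
      have he : (s+1) * (8/(m:ℝ)) + 2*s/m = (10*s+8)/m := by field_simp; ring
      rw [he, div_le_div_iff₀ hm' hm']
      nlinarith [hs1, hm']
    linarith [hA, hB, h2, h3, h4]
  calc (volume (⋃ x ∈ U, Set.Icc (x:ℝ) ((succ x:ℚ):ℝ))).toReal
      ≤ ∑ x ∈ U, (((succ x:ℚ):ℝ) - (x:ℝ)) := h1
    _ ≤ ∑ x ∈ U, f x := Finset.sum_le_sum hgap
    _ ≤ 18 * s / m := htot
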